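/- Let P₁, P₂, Q be double posets and let P = P₁·P₂ be their composition (P = P₁ ⊔ P₂, with x <_r y for all x ∈ P₁, y ∈ P₂). The map sending a bijection σ : P₁·P₂ → Q to the pair of restrictions (σ|_{P₁}, σ|_{P₂}) is a bijection from Bij(P₁·P₂, Q) onto the disjoint union over subsets I ⊆ Q of Bij(P₁, Q∖I) × Bij(P₂, I), where I = σ(P₂). Moreover, setting φ₃(σ) = #{(x,y) ∈ P² : x <_r y and σ(x) <_r σ(y)}, one has φ₃(σ) = φ₃(σ|_{P₁}) + φ₃(σ|_{P₂}) + r_{Q∖I}^I, where r_{Q∖I}^I = #{(a,b) ∈ (Q∖I)×I : a <_r b}. -/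
import Mathlib


/-- A double poset: a finite set with two partial orders. -/
structure DoublePoset (α : Type) where
  leh : α → α → Prop
  ler : α → α → Prop
  leh_refl : ∀ x, leh x x
  leh_antisymm : ∀ ⦃x y⦄, leh x y → leh y x → x = y
  leh_trans : ∀ ⦃x y z⦄, leh x y → leh y z → leh x z
  ler_refl : ∀ x, ler x x
  ler_antisymm : ∀ ⦃x y⦄, ler x y → ler y x → x = y
  ler_trans : ∀ ⦃x y z⦄, ler x y → ler y z → ler x z

/-- Strict version of `leh`. -/
def DoublePoset.lth {α : Type} (P : DoublePoset α) (x y : α) : Prop :=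
  P.leh x y ∧ x ≠ y

/-- Strict version of `ler`. -/
def DoublePoset.ltr {α : Type} (P : DoublePoset α) (x y : α) : Prop :=
  P.ler x y ∧ x ≠ y

/-- The composition `P₁ · P₂` of two double posets: disjoint union, with
`x <ᵣ y` for every `x ∈ P₁`, `y ∈ P₂`, and no new `≤ₕ` relations. -/
def DoublePoset.comp {α β : Type} (P₁ : DoublePoset α) (P₂ : DoublePoset β) :
    DoublePoset (α ⊕ β) where
  leh x y := match x, y with
    | Sum.inl a, Sum.inl b => P₁.leh a b
    | Sum.inr a, Sum.inr b => P₂.leh a b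
    | _, _ => False
  ler x y := match x, y with
    | Sum.inl a, Sum.inl b => P₁.ler a b
    | Sum.inr a, Sum.inr b => P₂.ler a b
    | Sum.inl _, Sum.inr _ => True
    | Sum.inr _, Sum.inl _ => False
  leh_refl x := by cases x with
    | inl a => exact P₁.leh_refl a
    | inr b => exact P₂.leh_refl b
  leh_antisymm x y := by
    cases x <;> cases y <;> intro h1 h2 <;> simp_all <;>
      first
        | exact P₁.leh_antisymm h1 h2
        | exact P₂.leh_antisymm h1 h2
  leh_trans x y z := by
    cases x <;> cases y <;> cases z <;> intro h1 h2 <;> simp_all <;>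
      first
        | exact P₁.leh_trans h1 h2
        | exact P₂.leh_trans h1 h2
  ler_refl x := by cases x with
    | inl a => exact P₁.ler_refl a
    | inr b => exact P₂.ler_refl b
  ler_antisymm x y := by
    cases x <;> cases y <;> intro h1 h2 <;> simp_all <;>
      first
        | exact P₁.ler_antisymm h1 h2
        | exact P₂.ler_antisymm h1 h2
  ler_trans x y z := by
    cases x <;> cases y <;> cases z <;> intro h1 h2 <;> simp_all <;>
      first
        | exact P₁.ler_trans h1 h2
        | exact P₂.ler_trans h1 h2

/-- Restriction of a double poset to a subset. -/
def DoublePoset.restrict {β : Type} (Q : DoublePoset β) (s : Set β) :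
    DoublePoset s where
  leh x y := Q.leh x y
  ler x y := Q.ler x y
  leh_refl x := Q.leh_refl x
  leh_antisymm x y h1 h2 := Subtype.ext (Q.leh_antisymm h1 h2)
  leh_trans _ _ _ h1 h2 := Q.leh_trans h1 h2
  ler_refl x := Q.ler_refl x
  ler_antisymm x y h1 h2 := Subtype.ext (Q.ler_antisymm h1 h2)
  ler_trans _ _ _ h1 h2 := Q.ler_trans h1 h2

/-- The statistic `φ₃` of a bijection between two double posets. -/
noncomputable def phi3 {α β : Type} (P : DoublePoset α) (Q : DoublePoset β)
    (σ : α ≃ β) : ℕ :=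
  Set.ncard {p : α × α | P.ltr p.1 p.2 ∧ Q.ltr (σ p.1) (σ p.2)}

/-- `r_A^B`: number of pairs `(a,b) ∈ A × B` with `a <ᵣ b`. -/
noncomputable def rcountS {β : Type} (Q : DoublePoset β) (A B : Set β) : ℕ :=
  Set.ncard {p : β × β | p.1 ∈ A ∧ p.2 ∈ B ∧ Q.ltr p.1 p.2}

/-- The map sending a bijection `σ : P₁ · P₂ → Q` to `(I, σ|_{P₁}, σ|_{P₂})`
where `I = σ(P₂)`. -/
noncomputable def F {α β γ : Type} (σ : (α ⊕ β) ≃ γ) :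
    Σ I : Set γ, (α ≃ ↥(Iᶜ)) × (β ≃ ↥I) :=
  ⟨Set.range (fun b => σ (Sum.inr b)),
    (Equiv.ofInjective (fun a => σ (Sum.inl a))
        (fun a a' h => by simpa using σ.injective h)).trans
      (Equiv.setCongr (by
        ext c
        obtain ⟨x, rfl⟩ := σ.surjective c
        cases x <;> simp)),
    Equiv.ofInjective (fun b => σ (Sum.inr b))
      (fun b b' h => by simpa using σ.injective h)⟩


lemma Fval1 {α β γ : Type} (σ : (α ⊕ β) ≃ γ) (a : α) :
    ((F σ).2.1 a : γ) = σ (Sum.inl a) := rfl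

lemma Fval2 {α β γ : Type} (σ : (α ⊕ β) ≃ γ) (b : β) :
    ((F σ).2.2 b : γ) = σ (Sum.inr b) := rfl

lemma sigma_ext {α β γ : Type} (x y : Σ I : Set γ, (α ≃ ↥(Iᶜ)) × (β ≃ ↥I))
    (h1 : x.1 = y.1) (h2 : ∀ a, ((x.2.1 a : γ)) = ((y.2.1 a : γ)))
    (h3 : ∀ b, ((x.2.2 b : γ)) = ((y.2.2 b : γ))) : x = y := by
  obtain ⟨I, e1, e2⟩ := x
  obtain ⟨J, f1, f2⟩ := y
  subst h1
  simp only [Sigma.mk.inj_iff, heq_eq_eq, Prod.mk.injEq]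
  exact ⟨trivial, Equiv.ext fun a => Subtype.ext (h2 a), Equiv.ext fun b => Subtype.ext (h3 b)⟩

open Classical in
noncomputable def G {α β γ : Type} (x : Σ I : Set γ, (α ≃ ↥(Iᶜ)) × (β ≃ ↥I)) :
    (α ⊕ β) ≃ γ :=
  (x.2.1.sumCongr (x.2.2.trans (Equiv.setCongr (compl_compl x.1).symm))).trans
    (Equiv.Set.sumCompl (x.1)ᶜ)

lemma Gval1 {α β γ : Type} (x : Σ I : Set γ, (α ≃ ↥(Iᶜ)) × (β ≃ ↥I)) (a : α) :
    G x (Sum.inl a) = (x.2.1 a : γ) := by simp [G]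

lemma Gval2 {α β γ : Type} (x : Σ I : Set γ, (α ≃ ↥(Iᶜ)) × (β ≃ ↥I)) (b : β) :
    G x (Sum.inr b) = (x.2.2 b : γ) := by simp [G]

lemma FG {α β γ : Type} (x : Σ I : Set γ, (α ≃ ↥(Iᶜ)) × (β ≃ ↥I)) : F (G x) = x := by
  apply sigma_ext
  · show Set.range (fun b => G x (Sum.inr b)) = x.1
    ext c
    constructor
    · rintro ⟨b, rfl⟩
      show G x (Sum.inr b) ∈ x.1
      rw [Gval2]
      exact (x.2.2 b).2
    · intro hc
      exact ⟨x.2.2.symm ⟨c, hc⟩, by show G x _ = c; rw [Gval2]; simp⟩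
  · intro a; rw [Fval1, Gval1]
  · intro b; rw [Fval2, Gval2]

lemma GF {α β γ : Type} (σ : (α ⊕ β) ≃ γ) : G (F σ) = σ := by
  ext x
  cases x with
  | inl a => rw [Gval1, Fval1]
  | inr b => rw [Gval2, Fval2]

lemma Fbij {α β γ : Type} : Function.Bijective (F (α := α) (β := β) (γ := γ)) :=
  Function.bijective_iff_has_inverse.mpr ⟨G, GF, FG⟩

theorem stmt10 {α β γ : Type} [Fintype α] [Fintype β] [Fintype γ]
    (P₁ : DoublePoset α) (P₂ : DoublePoset β) (Q : DoublePoset γ) :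
    Function.Bijective (F (α := α) (β := β) (γ := γ)) ∧
    ∀ σ : (α ⊕ β) ≃ γ,
      phi3 (P₁.comp P₂) Q σ =
        phi3 P₁ (Q.restrict ((F σ).1)ᶜ) (F σ).2.1 +
        phi3 P₂ (Q.restrict (F σ).1) (F σ).2.2 +
        rcountS Q ((F σ).1)ᶜ (F σ).1 := by
  classical
  refine ⟨Fbij, fun σ => ?_⟩
  set T₁ : Set (α × α) :=
    {p | P₁.ltr p.1 p.2 ∧ Q.ltr (σ (Sum.inl p.1)) (σ (Sum.inl p.2))} with hT₁
  set T₂ : Set (β × β) :=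
    {p | P₂.ltr p.1 p.2 ∧ Q.ltr (σ (Sum.inr p.1)) (σ (Sum.inr p.2))} with hT₂
  set T₃ : Set (α × β) :=
    {p | Q.ltr (σ (Sum.inl p.1)) (σ (Sum.inr p.2))} with hT₃
  have hS : {p : (α ⊕ β) × (α ⊕ β) |
        (P₁.comp P₂).ltr p.1 p.2 ∧ Q.ltr (σ p.1) (σ p.2)} =
      (Prod.map Sum.inl Sum.inl '' T₁ ∪ Prod.map Sum.inr Sum.inr '' T₂) ∪
        Prod.map Sum.inl Sum.inr '' T₃ := by
    ext ⟨x, y⟩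
    cases x <;> cases y <;>
      simp [hT₁, hT₂, hT₃, DoublePoset.comp, DoublePoset.ltr, Prod.map,
        Set.mem_image, Prod.ext_iff]
  have hinj1 : Function.Injective (Prod.map (Sum.inl : α → α ⊕ β) (Sum.inl : α → α ⊕ β)) :=
    Sum.inl_injective.prodMap Sum.inl_injective
  have hinj2 : Function.Injective (Prod.map (Sum.inr : β → α ⊕ β) (Sum.inr : β → α ⊕ β)) :=
    Sum.inr_injective.prodMap Sum.inr_injective
  have hinj3 : Function.Injective (Prod.map (Sum.inl : α → α ⊕ β) (Sum.inr : β → α ⊕ β)) :=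
    Sum.inl_injective.prodMap Sum.inr_injective
  have hd12 : Disjoint (Prod.map Sum.inl Sum.inl '' T₁) (Prod.map Sum.inr Sum.inr '' T₂) := by
    rw [Set.disjoint_left]
    rintro p ⟨q, -, rfl⟩ ⟨r, -, h⟩
    simp [Prod.map, Prod.ext_iff] at h
  have hd3 : Disjoint (Prod.map Sum.inl Sum.inl '' T₁ ∪ Prod.map Sum.inr Sum.inr '' T₂)
      (Prod.map Sum.inl Sum.inr '' T₃) := by
    rw [Set.disjoint_left]
    rintro p (⟨q, -, rfl⟩ | ⟨q, -, rfl⟩) ⟨r, -, h⟩ <;>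
      simp [Prod.map, Prod.ext_iff] at h
  have hcard : phi3 (P₁.comp P₂) Q σ = T₁.ncard + T₂.ncard + T₃.ncard := by
    rw [phi3, hS, Set.ncard_union_eq hd3 (Set.toFinite _) (Set.toFinite _),
      Set.ncard_union_eq hd12 (Set.toFinite _) (Set.toFinite _),
      Set.ncard_image_of_injective _ hinj1, Set.ncard_image_of_injective _ hinj2,
      Set.ncard_image_of_injective _ hinj3]
  have h1 : phi3 P₁ (Q.restrict ((F σ).1)ᶜ) (F σ).2.1 = T₁.ncard := by
    rw [phi3]
    congr 1
    ext p
    simp only [hT₁, Set.mem_setOf_eq, DoublePoset.restrict, DoublePoset.ltr, ne_eq,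
      Subtype.ext_iff, Fval1]
  have h2 : phi3 P₂ (Q.restrict (F σ).1) (F σ).2.2 = T₂.ncard := by
    rw [phi3]
    congr 1
    ext p
    simp only [hT₂, Set.mem_setOf_eq, DoublePoset.restrict, DoublePoset.ltr, ne_eq,
      Subtype.ext_iff, Fval2]
  have h3 : rcountS Q ((F σ).1)ᶜ (F σ).1 = T₃.ncard := by
    rw [rcountS]
    have himg : {p : γ × γ | p.1 ∈ ((F σ).1)ᶜ ∧ p.2 ∈ (F σ).1 ∧ Q.ltr p.1 p.2} =
        (fun p : α × β => (σ (Sum.inl p.1), σ (Sum.inr p.2))) '' T₃ := by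
      ext ⟨c, d⟩
      constructor
      · rintro ⟨hc, hd, hq⟩
        obtain ⟨x, rfl⟩ := σ.surjective c
        cases x with
        | inl a =>
          obtain ⟨b, rfl⟩ := hd
          exact ⟨(a, b), hq, rfl⟩
        | inr b => exact absurd ⟨b, rfl⟩ hc
      · rintro ⟨⟨a, b⟩, h, heq⟩
        cases heq
        refine ⟨?_, ⟨b, rfl⟩, h⟩
        rintro ⟨b', hb'⟩
        exact absurd (σ.injective hb') (by simp)
    rw [himg]
    apply Set.ncard_image_of_injective
    rintro ⟨a, b⟩ ⟨a', b'⟩ h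
    simp only [Prod.ext_iff] at h
    obtain ⟨ha, hb⟩ := h
    have := σ.injective ha
    have := σ.injective hb
    simp_all
  rw [hcard, h1, h2, h3]
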